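/- Let f be twice differentiable on an open interval containing [m, M] with k ≤ f″(z) ≤ K for all z ∈ [m, M], where K > k ≥ 0. If E[f′(X)] ≠ 0 and t* := E[X·f′(X)]/E[f′(X)] ∈ [m, M], then the Slater type inequalities hold: (K/2)·E[(X − t*)²] ≥ f(t*) − E[f(X)] ≥ (k/2)·E[(X − t*)²]. -/

import Mathlib

open MeasureTheory Real Set

lemma tangent_aux {f f' f'' : ℝ → ℝ} {a b m M : ℝ} (ham : a < m) (hMb : M < b)
    (hd1 : ∀ x ∈ Set.Ioo a b, HasDerivAt f (f' x) x)
    (hd2 : ∀ x ∈ Set.Ioo a b, HasDerivAt f' (f'' x) x)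
    (h2 : ∀ z ∈ Set.Icc m M, 0 ≤ f'' z)
    {x t : ℝ} (hx : x ∈ Set.Icc m M) (ht : t ∈ Set.Icc m M) :
    f x + f' x * (t - x) ≤ f t := by
  have hsub : Set.Icc m M ⊆ Set.Ioo a b := fun y hy => ⟨ham.trans_le hy.1, hy.2.trans_lt hMb⟩
  have hev : ∀ y ∈ Set.Ioo a b, deriv f =ᶠ[nhds y] f' := by
    intro y hy
    exact Filter.eventuallyEq_of_mem (isOpen_Ioo.mem_nhds hy) (fun z hz => (hd1 z hz).deriv)
  have hconv : ConvexOn ℝ (Set.Icc m M) f := by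
    apply convexOn_of_deriv2_nonneg (convex_Icc m M)
    · exact fun y hy => ((hd1 y (hsub hy)).differentiableAt).continuousAt.continuousWithinAt
    · intro y hy
      rw [interior_Icc] at hy
      exact (hd1 y (hsub (Set.Ioo_subset_Icc_self hy))).differentiableAt.differentiableWithinAt
    · intro y hy
      rw [interior_Icc] at hy
      have hy' := hsub (Set.Ioo_subset_Icc_self hy)
      exact (((hev y hy').differentiableAt_iff).mpr
        (hd2 y hy').differentiableAt).differentiableWithinAt
    · intro y hy
      rw [interior_Icc] at hy
      have hy'' := Set.Ioo_subset_Icc_self hy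
      have hy' := hsub hy''
      have : deriv (deriv f) y = f'' y := by
        rw [(hev y hy').deriv_eq, (hd2 y hy').deriv]
      simpa [Function.iterate_succ, this] using h2 y hy''
  rcases lt_trichotomy x t with h | h | h
  · have hle := hconv.le_slope_of_hasDerivAt hx ht h (hd1 x (hsub hx))
    rw [slope_def_field] at hle
    rw [le_div_iff₀ (by linarith : (0:ℝ) < t - x)] at hle
    linarith
  · simp [h]
  · have hle := hconv.slope_le_of_hasDerivWithinAt_Iio ht hx h
      ((hd1 x (hsub hx)).hasDerivWithinAt)
    rw [slope_def_field, div_le_iff₀ (by linarith : (0:ℝ) < x - t)] at hle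
    nlinarith

lemma key_est {f : ℝ → ℝ} {a b m M k K : ℝ} (ham : a < m) (hMb : M < b)
    (hdiff1 : ∀ x ∈ Set.Ioo a b, DifferentiableAt ℝ f x)
    (hdiff2 : ∀ x ∈ Set.Ioo a b, DifferentiableAt ℝ (deriv f) x)
    (hbound : ∀ z ∈ Set.Icc m M, k ≤ deriv (deriv f) z ∧ deriv (deriv f) z ≤ K)
    {x t : ℝ} (hx : x ∈ Set.Icc m M) (ht : t ∈ Set.Icc m M) :
    k / 2 * (t - x) ^ 2 ≤ f t - f x - deriv f x * (t - x) ∧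
      f t - f x - deriv f x * (t - x) ≤ K / 2 * (t - x) ^ 2 := by
  constructor
  · have := tangent_aux (f := fun y => f y - k / 2 * y ^ 2)
      (f' := fun y => deriv f y - k * y) (f'' := fun y => deriv (deriv f) y - k)
      ham hMb (fun y hy => by
        have h := (hdiff1 y hy).hasDerivAt.sub ((hasDerivAt_pow 2 y).const_mul (k / 2))
        exact h.congr_deriv (by push_cast; ring))
      (fun y hy => by
        have h := (hdiff2 y hy).hasDerivAt.sub ((hasDerivAt_id y).const_mul k)
        exact h.congr_deriv (by ring))
      (fun z hz => by have := (hbound z hz).1; linarith) hx ht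
    nlinarith
  · have := tangent_aux (f := fun y => K / 2 * y ^ 2 - f y)
      (f' := fun y => K * y - deriv f y) (f'' := fun y => K - deriv (deriv f) y)
      ham hMb (fun y hy => by
        have h := ((hasDerivAt_pow 2 y).const_mul (K / 2)).sub (hdiff1 y hy).hasDerivAt
        exact h.congr_deriv (by push_cast; ring))
      (fun y hy => by
        have h := ((hasDerivAt_id y).const_mul K).sub (hdiff2 y hy).hasDerivAt
        exact h.congr_deriv (by ring))
      (fun z hz => by have := (hbound z hz).2; linarith) hx ht
    nlinarith

theorem stmt_10 {Ω : Type*} [MeasurableSpace Ω] (P : Measure Ω) [IsProbabilityMeasure P]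
    (X : Ω → ℝ) (m M : ℝ) (hmM : m < M)
    (hX : ∀ᵐ ω ∂P, X ω ∈ Set.Icc m M)
    (hXint : Integrable X P)
    (hX2int : Integrable (fun ω => (X ω) ^ 2) P)
    (f : ℝ → ℝ) (a b : ℝ) (ham : a < m) (hMb : M < b)
    (hdiff1 : ∀ x ∈ Set.Ioo a b, DifferentiableAt ℝ f x)
    (hdiff2 : ∀ x ∈ Set.Ioo a b, DifferentiableAt ℝ (deriv f) x)
    (k K : ℝ) (hk : 0 ≤ k) (hkK : k < K)
    (hbound : ∀ z ∈ Set.Icc m M, k ≤ deriv (deriv f) z ∧ deriv (deriv f) z ≤ K)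
    (hfXint : Integrable (fun ω => f (X ω)) P)
    (hdfXint : Integrable (fun ω => deriv f (X ω)) P)
    (hXdfXint : Integrable (fun ω => X ω * deriv f (X ω)) P)
    (hne : (∫ ω, deriv f (X ω) ∂P) ≠ 0)
    (hts : (∫ ω, X ω * deriv f (X ω) ∂P) / (∫ ω, deriv f (X ω) ∂P) ∈ Set.Icc m M) :
    let ts := (∫ ω, X ω * deriv f (X ω) ∂P) / (∫ ω, deriv f (X ω) ∂P)
    K / 2 * (∫ ω, (X ω - ts) ^ 2 ∂P) ≥ f ts - (∫ ω, f (X ω) ∂P) ∧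
    f ts - (∫ ω, f (X ω) ∂P) ≥ k / 2 * (∫ ω, (X ω - ts) ^ 2 ∂P) := by
  intro ts
  set r : Ω → ℝ := fun ω => f ts - f (X ω) - deriv f (X ω) * (ts - X ω) with hr
  have hrint : Integrable r P := by
    have : r = fun ω => (f ts - f (X ω) - ts * deriv f (X ω)) + X ω * deriv f (X ω) := by
      funext ω; simp only [hr]; ring
    rw [this]
    exact (((integrable_const (f ts)).sub hfXint).sub (hdfXint.const_mul ts)).add hXdfXint
  have hsqint : Integrable (fun ω => (X ω - ts) ^ 2) P := by
    have : (fun ω => (X ω - ts) ^ 2) =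
        fun ω => ((X ω) ^ 2 - (2 * ts) * X ω) + ts ^ 2 := by
      funext ω; ring
    rw [this]
    exact (hX2int.sub (hXint.const_mul (2 * ts))).add (integrable_const _)
  have hrint_eq : ∫ ω, r ω ∂P = f ts - ∫ ω, f (X ω) ∂P := by
    have hint1 : Integrable (fun ω => f ts - f (X ω) - ts * deriv f (X ω)) P :=
      ((integrable_const (f ts)).sub hfXint).sub (hdfXint.const_mul ts)
    have hsplit : ∫ ω, r ω ∂P = (∫ ω, (f ts - f (X ω) - ts * deriv f (X ω)) ∂P)
        + ∫ ω, X ω * deriv f (X ω) ∂P := by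
      rw [← integral_add hint1 hXdfXint]
      apply integral_congr_ae
      filter_upwards with ω
      simp only [hr]; ring
    have h2 : ∫ ω, (f ts - f (X ω) - ts * deriv f (X ω)) ∂P
        = f ts - (∫ ω, f (X ω) ∂P) - ts * ∫ ω, deriv f (X ω) ∂P := by
      have e1 : ∫ ω, (f ts - f (X ω) - ts * deriv f (X ω)) ∂P
          = ∫ ω, (f ts - (f (X ω) + ts * deriv f (X ω))) ∂P :=
        integral_congr_ae (by filter_upwards with ω; ring)
      have hI3 : Integrable (fun ω => ts * deriv f (X ω)) P := hdfXint.const_mul ts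
      have hI2 : Integrable (fun ω => f (X ω) + ts * deriv f (X ω)) P := hfXint.add hI3
      rw [e1, integral_sub (integrable_const _) hI2,
        integral_add hfXint hI3, integral_const, integral_const_mul]
      simp only [probReal_univ, measure_univ, ENNReal.toReal_one, smul_eq_mul, one_mul]
      ring
    have hts_eq : ts * ∫ ω, deriv f (X ω) ∂P = ∫ ω, X ω * deriv f (X ω) ∂P := by
      exact div_mul_cancel₀ _ hne
    rw [hsplit, h2]
    linarith
  have hub : ∀ᵐ ω ∂P, r ω ≤ K / 2 * (X ω - ts) ^ 2 := by
    filter_upwards [hX] with ω hω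
    have := (key_est ham hMb hdiff1 hdiff2 hbound hω hts).2
    simp only [hr]
    nlinarith
  have hlb : ∀ᵐ ω ∂P, k / 2 * (X ω - ts) ^ 2 ≤ r ω := by
    filter_upwards [hX] with ω hω
    have := (key_est ham hMb hdiff1 hdiff2 hbound hω hts).1
    simp only [hr]
    nlinarith
  constructor
  · have h := integral_mono_ae hrint (hsqint.const_mul (K / 2)) hub
    rw [integral_const_mul] at h
    rw [ge_iff_le, ← hrint_eq]
    exact h
  · have h := integral_mono_ae (hsqint.const_mul (k / 2)) hrint hlb
    rw [integral_const_mul] at h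
    rw [ge_iff_le, ← hrint_eq]
    exact h
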